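/- If s > 1/2, then for all u₀ ∈ H^s_per([-π,π]) there exist T = T(‖u₀‖_{H^s_per}) > 0 and a unique solution u ∈ C([-T,T]; H^s_per) of the periodic initial value problem u_t + u_x + u u_x + H u_{xt} = 0, u(·,0) = u₀, where H denotes the periodic Hilbert transform. -/

import Mathlib

/-!
Local well-posedness for the periodic regularized Benjamin–Ono equation
  u_t + u_x + u u_x + H u_{xt} = 0,  u(·,0) = u₀,
for u₀ ∈ H^s_per([-π,π]), s > 1/2.  We work on the Fourier side: a 2π-periodic
function is represented by its sequence of Fourier coefficients `a : ℤ → ℂ`,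
the H^s norm is ‖a‖²_{H^s} = 2π Σ (1+k²)^s |a k|², and the equation is
equivalent to the integral equation u(t) = u₀ + ∫₀ᵗ K(u + u²/2) dτ with
(Ku)^(n) = (-in/(1+|n|)) û(n) and products becoming discrete convolutions.
-/

open MeasureTheory

/-- Membership in `H^s_per` (finite Sobolev norm) on the Fourier side. -/
def inHs (s : ℝ) (a : ℤ → ℂ) : Prop :=
  Summable fun k : ℤ => (1 + (k : ℝ) ^ 2) ^ s * ‖a k‖ ^ 2

/-- The periodic Sobolev norm `‖a‖_{H^s_per}`. -/
noncomputable def hNorm (s : ℝ) (a : ℤ → ℂ) : ℝ :=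
  Real.sqrt (2 * Real.pi * ∑' k : ℤ, (1 + (k : ℝ) ^ 2) ^ s * ‖a k‖ ^ 2)

/-- Fourier multiplier of `K = -∂ₓ (1 + H∂ₓ)⁻¹`. -/
noncomputable def Kmul (n : ℤ) : ℂ := (-Complex.I * n) / (1 + |n|)

/-- Discrete convolution: the Fourier coefficients of a product. -/
noncomputable def fconv (a b : ℤ → ℂ) (n : ℤ) : ℂ := ∑' m : ℤ, a m * b (n - m)

/-- `u : ℝ → (ℤ → ℂ)` is a solution of the rBO integral equation on `[-T, T]`
belonging to `C([-T,T]; H^s_per)`, with initial datum `u₀`. -/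
def IsSol (s T : ℝ) (u₀ : ℤ → ℂ) (u : ℝ → ℤ → ℂ) : Prop :=
  (∀ t ∈ Set.Icc (-T) T, inHs s (u t)) ∧
  (∀ t₀ ∈ Set.Icc (-T) T,
     Filter.Tendsto (fun t => hNorm s (fun k => u t k - u t₀ k))
       (nhdsWithin t₀ (Set.Icc (-T) T)) (nhds 0)) ∧
  (∀ t ∈ Set.Icc (-T) T, ∀ n : ℤ,
     u t n = u₀ n + ∫ τ in (0:ℝ)..t,
       Kmul n * (u τ n + (1 / 2) * fconv (u τ) (u τ) n))


open scoped ENNReal NNReal Topology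
open Metric Set Filter

namespace RBO



noncomputable def wt (s : ℝ) (n : ℤ) : ℝ :=
  Real.sqrt (2 * Real.pi) * (1 + (n : ℝ) ^ 2) ^ (s / 2)

lemma one_le_sqrt_two_pi : (1:ℝ) ≤ Real.sqrt (2 * Real.pi) := by
  rw [show (1:ℝ) = Real.sqrt 1 from (Real.sqrt_one).symm]
  apply Real.sqrt_le_sqrt
  nlinarith [Real.pi_gt_three]

lemma one_le_base (n : ℤ) : (1:ℝ) ≤ 1 + (n:ℝ)^2 := by nlinarith [sq_nonneg ((n:ℝ))]

lemma one_le_wt {s : ℝ} (hs : 0 ≤ s) (n : ℤ) : 1 ≤ wt s n := by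
  have h1 : (1:ℝ) ≤ (1 + (n:ℝ)^2) ^ (s/2) :=
    Real.one_le_rpow (one_le_base n) (by linarith)
  calc (1:ℝ) ≤ Real.sqrt (2 * Real.pi) := one_le_sqrt_two_pi
  _ = Real.sqrt (2 * Real.pi) * 1 := by ring
  _ ≤ wt s n := by
      unfold wt
      exact mul_le_mul_of_nonneg_left h1 (Real.sqrt_nonneg _)

lemma wt_pos {s : ℝ} (hs : 0 ≤ s) (n : ℤ) : 0 < wt s n :=
  lt_of_lt_of_le one_pos (one_le_wt hs n)

lemma four_rpow_half (s : ℝ) : (4:ℝ) ^ (s/2) = 2 ^ s := by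
  have h : (4:ℝ) = (2:ℝ) ^ ((2:ℕ):ℝ) := by rw [Real.rpow_natCast]; norm_num
  rw [h, ← Real.rpow_mul (by norm_num : (0:ℝ) ≤ 2)]
  norm_num
  rw [show (2:ℝ) * (s/2) = s by ring]

lemma wt_sub {s : ℝ} (hs : 0 ≤ s) (n m : ℤ) :
    wt s n ≤ 2 ^ s * (wt s m + wt s (n - m)) := by
  have h2s : (0:ℝ) < 2 ^ s := Real.rpow_pos_of_pos (by norm_num) s
  have key : ∀ k : ℤ, (1 + (n:ℝ)^2) ≤ 4 * (1 + (k:ℝ)^2) →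
      wt s n ≤ 2 ^ s * wt s k := by
    intro k hk
    have h0 : (0:ℝ) ≤ 1 + (n:ℝ)^2 := by positivity
    have h1 : (1 + (n:ℝ)^2) ^ (s/2) ≤ (4 * (1 + (k:ℝ)^2)) ^ (s/2) :=
      Real.rpow_le_rpow h0 hk (by linarith)
    have h2 : (4 * (1 + (k:ℝ)^2)) ^ (s/2)
        = 2 ^ s * (1 + (k:ℝ)^2) ^ (s/2) := by
      rw [Real.mul_rpow (by norm_num) (by positivity), four_rpow_half]
    unfold wt
    calc Real.sqrt (2*Real.pi) * (1 + (n:ℝ)^2) ^ (s/2)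
        ≤ Real.sqrt (2*Real.pi) * (2 ^ s * (1 + (k:ℝ)^2) ^ (s/2)) := by
          apply mul_le_mul_of_nonneg_left _ (Real.sqrt_nonneg _)
          rw [← h2]; exact h1
      _ = 2 ^ s * (Real.sqrt (2*Real.pi) * (1 + (k:ℝ)^2) ^ (s/2)) := by ring
  rcases le_total ((1:ℝ) + ((n - m : ℤ):ℝ)^2) (1 + (m:ℝ)^2) with h | h
  · have hb : (1 + (n:ℝ)^2) ≤ 4 * (1 + (m:ℝ)^2) := by
      push_cast at h ⊢; nlinarith [sq_nonneg ((2:ℝ)*(m:ℝ) - (n:ℝ))]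
    calc wt s n ≤ 2 ^ s * wt s m := key m hb
      _ ≤ 2 ^ s * (wt s m + wt s (n-m)) := by
          have := (wt_pos hs (n-m)).le
          nlinarith
  · have hb : (1 + (n:ℝ)^2) ≤ 4 * (1 + ((n-m : ℤ):ℝ)^2) := by
      push_cast at h ⊢; nlinarith [sq_nonneg ((n:ℝ) - 2*(m:ℝ))]
    calc wt s n ≤ 2 ^ s * wt s (n - m) := key (n-m) hb
      _ ≤ 2 ^ s * (wt s m + wt s (n-m)) := by
          have := (wt_pos hs m).le
          nlinarith

/-- summability of the inverse squared weights (`s > 1/2`). -/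
lemma summable_wt_inv_sq {s : ℝ} (hs : 1/2 < s) :
    Summable (fun n : ℤ => ((wt s n) ^ 2)⁻¹) := by
  have hs0 : (0:ℝ) ≤ s := by linarith
  -- compare with (1+n²)^(-s) and then with n^(-2s)
  have hnat : Summable (fun n : ℕ => ((1 + ((n:ℤ):ℝ)^2) ^ s)⁻¹) := by
    rw [← summable_nat_add_iff 1]
    have hsum : Summable (fun n : ℕ => (((n+1 : ℕ):ℝ) ^ (2*s))⁻¹) :=
      (summable_nat_add_iff 1).mpr ((Real.summable_nat_rpow_inv).mpr (by linarith))
    apply Summable.of_nonneg_of_le (fun n => by positivity) _ hsum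
    intro n
    apply inv_anti₀ (by positivity)
    have h1 : (((n+1:ℕ)):ℝ) ^ (2*s) = ((((n+1:ℕ)):ℝ)^2) ^ s := by
      rw [← Real.rpow_natCast (((n+1:ℕ)):ℝ) 2, ← Real.rpow_mul (by positivity)]
      norm_num
    rw [h1]
    apply Real.rpow_le_rpow (by positivity) _ hs0
    push_cast; nlinarith [sq_nonneg ((n:ℝ))]
  have hint : Summable (fun n : ℤ => ((1 + (n:ℝ)^2) ^ s)⁻¹) := by
    apply Summable.of_nat_of_neg
    · exact_mod_cast hnat
    · refine hnat.congr fun n => ?_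
      push_cast; ring_nf
  apply Summable.of_nonneg_of_le (fun n => by positivity) _ hint
  intro n
  apply inv_anti₀ (by positivity)
  unfold wt
  rw [mul_pow, ← Real.rpow_natCast ((1 + (n:ℝ)^2) ^ (s/2)) 2,
    ← Real.rpow_mul (by positivity)]
  have h1 : s / 2 * ((2:ℕ):ℝ) = s := by push_cast; ring
  rw [h1]
  have h2 : 1 ≤ Real.sqrt (2*Real.pi) ^ 2 := by
    nlinarith [one_le_sqrt_two_pi]
  nlinarith [Real.rpow_pos_of_pos (show (0:ℝ) < 1 + (n:ℝ)^2 by positivity) s]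


/-! ### ℝ≥0∞ Cauchy–Schwarz (Jensen form) and convolution estimate -/

lemma nnreal_CS_finset (g f : ℤ → ℝ≥0) (t : Finset ℤ) :
    (∑ n ∈ t, g n * f n) ^ 2 ≤ (∑ n ∈ t, g n) * ∑ n ∈ t, g n * f n ^ 2 := by
  have h := Finset.sum_mul_sq_le_sq_mul_sq t (fun n => NNReal.sqrt (g n))
      (fun n => NNReal.sqrt (g n) * f n)
  have e1 : ∀ n, NNReal.sqrt (g n) * (NNReal.sqrt (g n) * f n) = g n * f n := by
    intro n; rw [← mul_assoc, NNReal.mul_self_sqrt]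
  have e2 : ∀ n, NNReal.sqrt (g n) ^ 2 = g n := fun n => NNReal.sq_sqrt _
  have e3 : ∀ n, (NNReal.sqrt (g n) * f n) ^ 2 = g n * f n ^ 2 := by
    intro n; rw [mul_pow, NNReal.sq_sqrt]
  simp only [e1, e2, e3] at h
  exact h

lemma ennreal_CS (g f : ℤ → ℝ≥0) :
    (∑' n : ℤ, (g n : ℝ≥0∞) * (f n : ℝ≥0∞)) ^ 2
      ≤ (∑' n : ℤ, (g n : ℝ≥0∞)) * ∑' n : ℤ, (g n : ℝ≥0∞) * (f n : ℝ≥0∞) ^ 2 := by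
  have hgf : ∀ n : ℤ, (g n : ℝ≥0∞) * (f n : ℝ≥0∞) = ((g n * f n : ℝ≥0) : ℝ≥0∞) := by
    intro n; rw [ENNReal.coe_mul]
  have hgf2 : ∀ n : ℤ, (g n : ℝ≥0∞) * (f n : ℝ≥0∞) ^ 2 = ((g n * f n ^ 2 : ℝ≥0) : ℝ≥0∞) := by
    intro n; rw [ENNReal.coe_mul, ENNReal.coe_pow]
  simp only [hgf, hgf2]
  rw [ENNReal.tsum_eq_iSup_sum, sq, ENNReal.iSup_mul]
  apply iSup_le; intro t
  rw [ENNReal.mul_iSup]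
  apply iSup_le; intro r
  have hm : ∀ (u u' : Finset ℤ), u ⊆ u' →
      (∑ n ∈ u, ((g n * f n : ℝ≥0) : ℝ≥0∞)) ≤ ∑ n ∈ u', ((g n * f n : ℝ≥0) : ℝ≥0∞) :=
    fun u u' h => Finset.sum_le_sum_of_subset h
  calc (∑ n ∈ t, ((g n * f n : ℝ≥0) : ℝ≥0∞)) * ∑ n ∈ r, ((g n * f n : ℝ≥0) : ℝ≥0∞)
      ≤ (∑ n ∈ t ∪ r, ((g n * f n : ℝ≥0) : ℝ≥0∞)) * ∑ n ∈ t ∪ r, ((g n * f n : ℝ≥0) : ℝ≥0∞) :=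
        mul_le_mul' (hm _ _ Finset.subset_union_left) (hm _ _ Finset.subset_union_right)
    _ = (((∑ n ∈ t ∪ r, g n * f n : ℝ≥0)) : ℝ≥0∞) ^ 2 := by
        rw [← ENNReal.coe_finset_sum, ← sq, ← ENNReal.coe_pow]
    _ ≤ (((∑ n ∈ t ∪ r, g n) * ∑ n ∈ t ∪ r, g n * f n ^ 2 : ℝ≥0) : ℝ≥0∞) := by
        exact ENNReal.coe_le_coe.mpr (nnreal_CS_finset g f (t ∪ r))
    _ = ((∑ n ∈ t ∪ r, g n : ℝ≥0) : ℝ≥0∞) * ((∑ n ∈ t ∪ r, g n * f n ^ 2 : ℝ≥0) : ℝ≥0∞) := by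
        rw [ENNReal.coe_mul]
    _ ≤ (∑' n : ℤ, (g n : ℝ≥0∞)) * ∑' n : ℤ, ((g n * f n ^ 2 : ℝ≥0) : ℝ≥0∞) := by
        apply mul_le_mul'
        · rw [ENNReal.coe_finset_sum]; exact ENNReal.sum_le_tsum _
        · rw [ENNReal.coe_finset_sum]; exact ENNReal.sum_le_tsum _

lemma tsum_sub_left (h : ℤ → ℝ≥0∞) (n : ℤ) : ∑' m : ℤ, h (n - m) = ∑' m : ℤ, h m :=
  (Equiv.subLeft n).tsum_eq h

lemma tsum_sub_right (h : ℤ → ℝ≥0∞) (m : ℤ) : ∑' n : ℤ, h (n - m) = ∑' n : ℤ, h n :=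
  (Equiv.subRight m).tsum_eq h

noncomputable def Wn (s : ℝ) (n : ℤ) : ℝ≥0 := (wt s n).toNNReal

lemma Wn_coe {s : ℝ} (hs : 0 ≤ s) (n : ℤ) : ((Wn s n : ℝ≥0) : ℝ) = wt s n :=
  Real.coe_toNNReal _ (wt_pos hs n).le

lemma Wn_ne_zero {s : ℝ} (hs : 0 ≤ s) (n : ℤ) : Wn s n ≠ 0 := by
  intro h
  have h2 := Wn_coe hs n
  rw [h] at h2
  have := wt_pos hs n
  rw [← h2] at this
  simp at this

noncomputable def Cw (s : ℝ) : ℝ≥0∞ := ∑' n : ℤ, ((((Wn s n) ^ 2)⁻¹ : ℝ≥0) : ℝ≥0∞)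

lemma Cw_ne_top {s : ℝ} (hs : 1/2 < s) : Cw s ≠ ⊤ := by
  have hs0 : (0:ℝ) ≤ s := by linarith
  rw [Cw, ENNReal.tsum_coe_ne_top_iff_summable, ← NNReal.summable_coe]
  have h : ∀ n : ℤ, ((((Wn s n) ^ 2)⁻¹ : ℝ≥0) : ℝ) = ((wt s n) ^ 2)⁻¹ := by
    intro n; rw [NNReal.coe_inv, NNReal.coe_pow, Wn_coe hs0]
  simp only [h]
  exact summable_wt_inv_sq hs

/-- `ℓ¹`-norm of a sequence is controlled by the weighted `ℓ²` norm. -/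
lemma l1_bound {s : ℝ} (hs : 1/2 < s) (y : ℤ → ℝ≥0) :
    (∑' n : ℤ, (y n : ℝ≥0∞)) ^ 2
      ≤ Cw s * ∑' n : ℤ, ((Wn s n * y n : ℝ≥0) : ℝ≥0∞) ^ 2 := by
  have hs0 : (0:ℝ) ≤ s := by linarith
  have h := ennreal_CS (fun n => ((Wn s n) ^ 2)⁻¹) (fun n => (Wn s n) ^ 2 * y n)
  have e1 : ∀ n : ℤ, ((((Wn s n) ^ 2)⁻¹ : ℝ≥0) : ℝ≥0∞) * (((Wn s n) ^ 2 * y n : ℝ≥0) : ℝ≥0∞)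
      = (y n : ℝ≥0∞) := by
    intro n
    rw [← ENNReal.coe_mul, ← mul_assoc, inv_mul_cancel₀ (pow_ne_zero 2 (Wn_ne_zero hs0 n)),
      one_mul]
  have e2 : ∀ n : ℤ, ((((Wn s n) ^ 2)⁻¹ : ℝ≥0) : ℝ≥0∞) * (((Wn s n) ^ 2 * y n : ℝ≥0) : ℝ≥0∞) ^ 2
      = ((Wn s n * y n : ℝ≥0) : ℝ≥0∞) ^ 2 := by
    intro n
    have hnn : ((Wn s n) ^ 2)⁻¹ * ((Wn s n) ^ 2 * y n) ^ 2 = (Wn s n * y n) ^ 2 := by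
      have hne2 : (Wn s n) ^ 2 ≠ 0 := pow_ne_zero 2 (Wn_ne_zero hs0 n)
      have hr : ((Wn s n) ^ 2 * y n) ^ 2 = (Wn s n) ^ 2 * (Wn s n * y n) ^ 2 := by ring
      rw [hr, ← mul_assoc, inv_mul_cancel₀ hne2, one_mul]
    rw [← ENNReal.coe_pow, ← ENNReal.coe_mul, hnn, ENNReal.coe_pow]
  simp only [e1, e2] at h
  simpa [Cw] using h

noncomputable def CC (s : ℝ) : ℝ≥0∞ := 8 * ((((2:ℝ≥0) ^ s : ℝ≥0)) : ℝ≥0∞) ^ 2 * Cw s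

lemma CC_ne_top {s : ℝ} (hs : 1/2 < s) : CC s ≠ ⊤ := by
  apply ENNReal.mul_ne_top
  · apply ENNReal.mul_ne_top (by norm_num)
    exact ENNReal.pow_ne_top ENNReal.coe_ne_top
  · exact Cw_ne_top hs

lemma CC_pos {s : ℝ} (hs : 1/2 < s) : 0 < CC s := by
  apply ENNReal.mul_pos
  · apply mul_ne_zero (by norm_num)
    apply pow_ne_zero
    rw [ENNReal.coe_ne_zero]
    exact (NNReal.rpow_pos (by norm_num : (0:ℝ≥0) < 2)).ne'
  · rw [Cw]
    intro h0
    rw [ENNReal.tsum_eq_zero] at h0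
    have h1 := h0 0
    rw [ENNReal.coe_eq_zero] at h1
    exact (inv_ne_zero (pow_ne_zero 2 (Wn_ne_zero (by linarith) 0))) h1

/-- The fundamental convolution estimate: weighted ℓ² bound on convolutions. -/
lemma core_est {s : ℝ} (hs : 1/2 < s) (x y : ℤ → ℝ≥0) :
    ∑' n : ℤ, ((Wn s n : ℝ≥0∞) * ∑' m : ℤ, (x m : ℝ≥0∞) * (y (n - m) : ℝ≥0∞)) ^ 2
      ≤ CC s * ((∑' n : ℤ, ((Wn s n * x n : ℝ≥0) : ℝ≥0∞) ^ 2)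
          * ∑' n : ℤ, ((Wn s n * y n : ℝ≥0) : ℝ≥0∞) ^ 2) := by
  have hs0 : (0:ℝ) ≤ s := by linarith
  set c2 : ℝ≥0∞ := ((((2:ℝ≥0) ^ s : ℝ≥0)) : ℝ≥0∞) with hc2
  set A : ℤ → ℝ≥0 := fun m => Wn s m * x m with hA
  set B : ℤ → ℝ≥0 := fun m => Wn s m * y m with hB
  set X : ℝ≥0∞ := ∑' n : ℤ, ((A n : ℝ≥0) : ℝ≥0∞) ^ 2 with hX
  set Y : ℝ≥0∞ := ∑' n : ℤ, ((B n : ℝ≥0) : ℝ≥0∞) ^ 2 with hY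
  set Xs : ℝ≥0∞ := ∑' n : ℤ, (x n : ℝ≥0∞) with hXs
  set Ys : ℝ≥0∞ := ∑' n : ℤ, (y n : ℝ≥0∞) with hYs
  set p : ℤ → ℝ≥0∞ := fun n => ∑' m : ℤ, (y (n - m) : ℝ≥0∞) * ((A m : ℝ≥0) : ℝ≥0∞) with hp
  set q : ℤ → ℝ≥0∞ := fun n => ∑' m : ℤ, (x m : ℝ≥0∞) * ((B (n - m) : ℝ≥0) : ℝ≥0∞) with hq
  -- pointwise weight subadditivity in ℝ≥0∞
  have hWsub : ∀ n m : ℤ, (Wn s n : ℝ≥0∞) ≤ c2 * ((Wn s m : ℝ≥0∞) + (Wn s (n - m) : ℝ≥0∞)) := by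
    intro n m
    rw [hc2, ← ENNReal.coe_add, ← ENNReal.coe_mul, ENNReal.coe_le_coe, ← NNReal.coe_le_coe]
    push_cast [Wn_coe hs0, NNReal.coe_rpow]
    exact wt_sub hs0 n m
  -- step A : pointwise bound on the weighted convolution
  have stepA : ∀ n : ℤ,
      (Wn s n : ℝ≥0∞) * ∑' m : ℤ, (x m : ℝ≥0∞) * (y (n - m) : ℝ≥0∞)
        ≤ c2 * (p n + q n) := by
    intro n
    rw [← ENNReal.tsum_mul_left]
    have hterm : ∀ m : ℤ,
        (Wn s n : ℝ≥0∞) * ((x m : ℝ≥0∞) * (y (n - m) : ℝ≥0∞))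
          ≤ c2 * ((y (n - m) : ℝ≥0∞) * ((A m : ℝ≥0) : ℝ≥0∞)
              + (x m : ℝ≥0∞) * ((B (n - m) : ℝ≥0) : ℝ≥0∞)) := by
      intro m
      calc (Wn s n : ℝ≥0∞) * ((x m : ℝ≥0∞) * (y (n - m) : ℝ≥0∞))
          ≤ (c2 * ((Wn s m : ℝ≥0∞) + (Wn s (n - m) : ℝ≥0∞)))
              * ((x m : ℝ≥0∞) * (y (n - m) : ℝ≥0∞)) :=
            mul_le_mul_left (hWsub n m) _
        _ = c2 * ((y (n - m) : ℝ≥0∞) * ((A m : ℝ≥0) : ℝ≥0∞)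
              + (x m : ℝ≥0∞) * ((B (n - m) : ℝ≥0) : ℝ≥0∞)) := by
            simp only [hA, hB, ENNReal.coe_mul]
            ring
    calc (∑' m : ℤ, (Wn s n : ℝ≥0∞) * ((x m : ℝ≥0∞) * (y (n - m) : ℝ≥0∞)))
        ≤ ∑' m : ℤ, c2 * ((y (n - m) : ℝ≥0∞) * ((A m : ℝ≥0) : ℝ≥0∞)
            + (x m : ℝ≥0∞) * ((B (n - m) : ℝ≥0) : ℝ≥0∞)) := ENNReal.tsum_le_tsum hterm
      _ = c2 * (p n + q n) := by
          rw [ENNReal.tsum_mul_left, ENNReal.tsum_add]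
  -- (a+b)^2 ≤ 3(a^2+b^2) in ℝ≥0∞
  have sq3 : ∀ a b : ℝ≥0∞, (a + b) ^ 2 ≤ 3 * (a ^ 2 + b ^ 2) := by
    intro a b
    have hab : a * b ≤ a ^ 2 + b ^ 2 := by
      rcases le_total a b with h | h
      · calc a * b ≤ b * b := mul_le_mul_left h b
          _ = b ^ 2 := (sq b).symm
          _ ≤ a ^ 2 + b ^ 2 := le_add_self
      · calc a * b ≤ a * a := mul_le_mul_right h a
          _ = a ^ 2 := (sq a).symm
          _ ≤ a ^ 2 + b ^ 2 := le_self_add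
    calc (a + b) ^ 2 = (a ^ 2 + b ^ 2) + 2 * (a * b) := by ring
      _ ≤ (a ^ 2 + b ^ 2) + 2 * (a ^ 2 + b ^ 2) := by
          exact add_le_add_right (mul_le_mul_right hab 2) _
      _ = 3 * (a ^ 2 + b ^ 2) := by ring
  -- step C : tsum of p² is bounded
  have stepP : ∑' n : ℤ, p n ^ 2 ≤ (Cw s * Y) * X := by
    have hCS : ∀ n : ℤ, p n ^ 2 ≤ Ys * ∑' m : ℤ, (y (n - m) : ℝ≥0∞) * ((A m : ℝ≥0) : ℝ≥0∞) ^ 2 := by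
      intro n
      have h := ennreal_CS (fun m => y (n - m)) A
      rw [tsum_sub_left (fun k => ((y k : ℝ≥0) : ℝ≥0∞)) n] at h
      exact h
    calc ∑' n : ℤ, p n ^ 2
        ≤ ∑' n : ℤ, Ys * ∑' m : ℤ, (y (n - m) : ℝ≥0∞) * ((A m : ℝ≥0) : ℝ≥0∞) ^ 2 :=
          ENNReal.tsum_le_tsum hCS
      _ = Ys * ∑' n : ℤ, ∑' m : ℤ, (y (n - m) : ℝ≥0∞) * ((A m : ℝ≥0) : ℝ≥0∞) ^ 2 :=
          ENNReal.tsum_mul_left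
      _ = Ys * ∑' m : ℤ, ∑' n : ℤ, (y (n - m) : ℝ≥0∞) * ((A m : ℝ≥0) : ℝ≥0∞) ^ 2 := by
          rw [ENNReal.tsum_comm]
      _ = Ys * ∑' m : ℤ, (∑' n : ℤ, (y (n - m) : ℝ≥0∞)) * ((A m : ℝ≥0) : ℝ≥0∞) ^ 2 := by
          congr 1; exact tsum_congr fun m => ENNReal.tsum_mul_right
      _ = Ys * (Ys * X) := by
          congr 1
          calc ∑' m : ℤ, (∑' n : ℤ, (y (n - m) : ℝ≥0∞)) * ((A m : ℝ≥0) : ℝ≥0∞) ^ 2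
              = ∑' m : ℤ, Ys * ((A m : ℝ≥0) : ℝ≥0∞) ^ 2 := by
                refine tsum_congr fun m => ?_
                rw [tsum_sub_right (fun k => ((y k : ℝ≥0) : ℝ≥0∞)) m]
            _ = Ys * X := ENNReal.tsum_mul_left
      _ = Ys ^ 2 * X := by ring
      _ ≤ (Cw s * Y) * X := mul_le_mul_left (l1_bound hs y) X
  have stepQ : ∑' n : ℤ, q n ^ 2 ≤ (Cw s * X) * Y := by
    have hCS : ∀ n : ℤ, q n ^ 2 ≤ Xs * ∑' m : ℤ, (x m : ℝ≥0∞) * ((B (n - m) : ℝ≥0) : ℝ≥0∞) ^ 2 := by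
      intro n
      exact ennreal_CS x (fun m => B (n - m))
    calc ∑' n : ℤ, q n ^ 2
        ≤ ∑' n : ℤ, Xs * ∑' m : ℤ, (x m : ℝ≥0∞) * ((B (n - m) : ℝ≥0) : ℝ≥0∞) ^ 2 :=
          ENNReal.tsum_le_tsum hCS
      _ = Xs * ∑' n : ℤ, ∑' m : ℤ, (x m : ℝ≥0∞) * ((B (n - m) : ℝ≥0) : ℝ≥0∞) ^ 2 :=
          ENNReal.tsum_mul_left
      _ = Xs * ∑' m : ℤ, ∑' n : ℤ, (x m : ℝ≥0∞) * ((B (n - m) : ℝ≥0) : ℝ≥0∞) ^ 2 := by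
          rw [ENNReal.tsum_comm]
      _ = Xs * ∑' m : ℤ, (x m : ℝ≥0∞) * ∑' n : ℤ, ((B (n - m) : ℝ≥0) : ℝ≥0∞) ^ 2 := by
          congr 1; exact tsum_congr fun m => ENNReal.tsum_mul_left
      _ = Xs * (Xs * Y) := by
          congr 1
          calc ∑' m : ℤ, (x m : ℝ≥0∞) * ∑' n : ℤ, ((B (n - m) : ℝ≥0) : ℝ≥0∞) ^ 2
              = ∑' m : ℤ, (x m : ℝ≥0∞) * Y := by
                refine tsum_congr fun m => ?_
                congr 1
                exact tsum_sub_right (fun k => ((B k : ℝ≥0) : ℝ≥0∞) ^ 2) m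
            _ = Xs * Y := by rw [← ENNReal.tsum_mul_right]
      _ = Xs ^ 2 * Y := by ring
      _ ≤ (Cw s * X) * Y := mul_le_mul_left (l1_bound hs x) Y
  -- put everything together
  calc ∑' n : ℤ, ((Wn s n : ℝ≥0∞) * ∑' m : ℤ, (x m : ℝ≥0∞) * (y (n - m) : ℝ≥0∞)) ^ 2
      ≤ ∑' n : ℤ, (c2 * (p n + q n)) ^ 2 := by
        refine ENNReal.tsum_le_tsum fun n => ?_
        rw [sq, sq]
        exact mul_le_mul' (stepA n) (stepA n)
    _ = ∑' n : ℤ, c2 ^ 2 * (p n + q n) ^ 2 := by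
        refine tsum_congr fun n => ?_; rw [mul_pow]
    _ ≤ ∑' n : ℤ, c2 ^ 2 * (3 * (p n ^ 2 + q n ^ 2)) := by
        refine ENNReal.tsum_le_tsum fun n => mul_le_mul_right (sq3 _ _) _
    _ = 3 * c2 ^ 2 * (∑' n : ℤ, p n ^ 2 + ∑' n : ℤ, q n ^ 2) := by
        rw [← ENNReal.tsum_add, ← ENNReal.tsum_mul_left]
        refine tsum_congr fun n => ?_; ring
    _ ≤ 3 * c2 ^ 2 * ((Cw s * Y) * X + (Cw s * X) * Y) :=
        mul_le_mul_right (add_le_add stepP stepQ) _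
    _ = 6 * c2 ^ 2 * Cw s * (X * Y) := by ring
    _ ≤ 8 * c2 ^ 2 * Cw s * (X * Y) := by
        gcongr
        norm_num
    _ = CC s * (X * Y) := by rw [CC, ← hc2]

section
variable {s : ℝ}

noncomputable def Phi (s : ℝ) (a : ℤ → ℂ) : ℝ≥0∞ :=
  ∑' n : ℤ, ((Wn s n * ‖a n‖₊ : ℝ≥0) : ℝ≥0∞) ^ 2

lemma wt_sq (hs : 0 ≤ s) (n : ℤ) :
    (wt s n) ^ 2 = 2 * Real.pi * (1 + (n:ℝ)^2) ^ s := by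
  unfold wt
  rw [mul_pow, Real.sq_sqrt (by positivity)]
  congr 1
  rw [← Real.rpow_natCast ((1 + (n:ℝ)^2) ^ (s/2)) 2, ← Real.rpow_mul (by positivity)]
  norm_num

lemma phi_term (hs : 0 ≤ s) (a : ℤ → ℂ) (n : ℤ) :
    (((Wn s n * ‖a n‖₊ : ℝ≥0) : ℝ)) ^ 2
      = 2 * Real.pi * ((1 + (n:ℝ)^2) ^ s * ‖a n‖ ^ 2) := by
  rw [NNReal.coe_mul, Wn_coe hs, coe_nnnorm, mul_pow, wt_sq hs]
  ring

lemma two_pi_ne : (2 * Real.pi) ≠ 0 := by positivity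

lemma inHs_iff (hs : 0 ≤ s) (a : ℤ → ℂ) : inHs s a ↔ Phi s a ≠ ⊤ := by
  rw [Phi]
  have e : (fun n : ℤ => (((Wn s n * ‖a n‖₊ : ℝ≥0)) : ℝ≥0∞) ^ 2)
      = fun n : ℤ => ((((Wn s n * ‖a n‖₊) ^ 2 : ℝ≥0)) : ℝ≥0∞) := by
    funext n; rw [ENNReal.coe_pow]
  rw [e, ENNReal.tsum_coe_ne_top_iff_summable, ← NNReal.summable_coe]
  have e2 : (fun n : ℤ => (((Wn s n * ‖a n‖₊) ^ 2 : ℝ≥0) : ℝ))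
      = fun n : ℤ => 2 * Real.pi * ((1 + (n:ℝ)^2) ^ s * ‖a n‖ ^ 2) := by
    funext n; rw [NNReal.coe_pow, phi_term hs]
  rw [e2, summable_mul_left_iff two_pi_ne]
  exact Iff.rfl

lemma Phi_toReal (hs : 0 ≤ s) {a : ℤ → ℂ} (ha : inHs s a) :
    (Phi s a).toReal = 2 * Real.pi * ∑' n : ℤ, (1 + (n:ℝ)^2) ^ s * ‖a n‖ ^ 2 := by
  rw [Phi, ENNReal.tsum_toReal_eq (fun n => by
    rw [← ENNReal.coe_pow]; exact ENNReal.coe_ne_top)]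
  have e : (fun n : ℤ => ((((Wn s n * ‖a n‖₊ : ℝ≥0)) : ℝ≥0∞) ^ 2).toReal)
      = fun n : ℤ => 2 * Real.pi * ((1 + (n:ℝ)^2) ^ s * ‖a n‖ ^ 2) := by
    funext n
    rw [ENNReal.toReal_pow, ENNReal.coe_toReal, phi_term hs]
  rw [e, tsum_mul_left]

lemma hNorm_eq_sqrt_phi (hs : 0 ≤ s) {a : ℤ → ℂ} (ha : inHs s a) :
    hNorm s a = Real.sqrt (Phi s a).toReal := by
  rw [hNorm, Phi_toReal hs ha]

/-- the `ℝ≥0∞`-valued convolution of norms -/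
noncomputable def Sconv (a b : ℤ → ℂ) (n : ℤ) : ℝ≥0∞ :=
  ∑' m : ℤ, ((‖a m‖₊ : ℝ≥0) : ℝ≥0∞) * ((‖b (n - m)‖₊ : ℝ≥0) : ℝ≥0∞)

lemma Sconv_tsum_le (hs : 1/2 < s) (a b : ℤ → ℂ) :
    ∑' n : ℤ, ((Wn s n : ℝ≥0∞) * Sconv a b n) ^ 2 ≤ CC s * (Phi s a * Phi s b) :=
  core_est hs (fun m => ‖a m‖₊) (fun m => ‖b m‖₊)

lemma Sconv_ne_top (hs : 1/2 < s) {a b : ℤ → ℂ} (ha : inHs s a) (hb : inHs s b) (n : ℤ) :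
    Sconv a b n ≠ ⊤ := by
  have hs0 : (0:ℝ) ≤ s := by linarith
  have htot : ∑' n : ℤ, ((Wn s n : ℝ≥0∞) * Sconv a b n) ^ 2 ≠ ⊤ := by
    apply ne_top_of_le_ne_top _ (Sconv_tsum_le hs a b)
    exact ENNReal.mul_ne_top (CC_ne_top hs)
      (ENNReal.mul_ne_top ((inHs_iff hs0 a).mp ha) ((inHs_iff hs0 b).mp hb))
  have hterm := ENNReal.ne_top_of_tsum_ne_top htot n
  have hWS : (Wn s n : ℝ≥0∞) * Sconv a b n ≠ ⊤ := by
    intro h; rw [h] at hterm; simp at hterm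
  intro h
  apply hWS
  rw [h, ENNReal.mul_top]
  rw [ENNReal.coe_ne_zero]
  exact Wn_ne_zero hs0 n

lemma conv_nn_summable (hs : 1/2 < s) {a b : ℤ → ℂ} (ha : inHs s a) (hb : inHs s b) (n : ℤ) :
    Summable (fun m : ℤ => ‖a m‖₊ * ‖b (n - m)‖₊) := by
  rw [← ENNReal.tsum_coe_ne_top_iff_summable]
  have e : (fun m : ℤ => ((‖a m‖₊ * ‖b (n - m)‖₊ : ℝ≥0) : ℝ≥0∞))
      = fun m : ℤ => ((‖a m‖₊ : ℝ≥0) : ℝ≥0∞) * ((‖b (n - m)‖₊ : ℝ≥0) : ℝ≥0∞) := by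
    funext m; rw [ENNReal.coe_mul]
  rw [e]
  exact Sconv_ne_top hs ha hb n

lemma conv_summable (hs : 1/2 < s) {a b : ℤ → ℂ} (ha : inHs s a) (hb : inHs s b) (n : ℤ) :
    Summable (fun m : ℤ => a m * b (n - m)) := by
  apply Summable.of_nnnorm
  have e : (fun m : ℤ => ‖a m * b (n - m)‖₊) = fun m : ℤ => ‖a m‖₊ * ‖b (n - m)‖₊ := by
    funext m; rw [nnnorm_mul]
  rw [e]
  exact conv_nn_summable hs ha hb n

lemma conv_nnnorm_le (hs : 1/2 < s) {a b : ℤ → ℂ} (ha : inHs s a) (hb : inHs s b) (n : ℤ) :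
    ((‖fconv a b n‖₊ : ℝ≥0) : ℝ≥0∞) ≤ Sconv a b n := by
  have hsum : Summable (fun m : ℤ => ‖a m * b (n - m)‖₊) := by
    have e : (fun m : ℤ => ‖a m * b (n - m)‖₊) = fun m : ℤ => ‖a m‖₊ * ‖b (n - m)‖₊ := by
      funext m; rw [nnnorm_mul]
    rw [e]; exact conv_nn_summable hs ha hb n
  calc ((‖fconv a b n‖₊ : ℝ≥0) : ℝ≥0∞)
      ≤ ((∑' m : ℤ, ‖a m * b (n - m)‖₊ : ℝ≥0) : ℝ≥0∞) :=
        ENNReal.coe_le_coe.mpr (nnnorm_tsum_le hsum)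
    _ = ∑' m : ℤ, ((‖a m * b (n - m)‖₊ : ℝ≥0) : ℝ≥0∞) := ENNReal.coe_tsum hsum
    _ = Sconv a b n := by
        refine tsum_congr fun m => ?_
        rw [nnnorm_mul, ENNReal.coe_mul]

lemma Phi_conv_le (hs : 1/2 < s) {a b : ℤ → ℂ} (ha : inHs s a) (hb : inHs s b) :
    Phi s (fconv a b) ≤ CC s * (Phi s a * Phi s b) := by
  refine le_trans ?_ (Sconv_tsum_le hs a b)
  rw [Phi]
  refine ENNReal.tsum_le_tsum fun n => ?_
  rw [ENNReal.coe_mul, sq, sq]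
  exact mul_le_mul' (mul_le_mul_right (conv_nnnorm_le hs ha hb n) _)
    (mul_le_mul_right (conv_nnnorm_le hs ha hb n) _)

lemma inHs_conv (hs : 1/2 < s) {a b : ℤ → ℂ} (ha : inHs s a) (hb : inHs s b) :
    inHs s (fconv a b) := by
  have hs0 : (0:ℝ) ≤ s := by linarith
  rw [inHs_iff hs0]
  apply ne_top_of_le_ne_top _ (Phi_conv_le hs ha hb)
  exact ENNReal.mul_ne_top (CC_ne_top hs)
    (ENNReal.mul_ne_top ((inHs_iff hs0 a).mp ha) ((inHs_iff hs0 b).mp hb))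

noncomputable def Kc (s : ℝ) : ℝ := Real.sqrt (CC s).toReal

lemma Kc_nonneg (s : ℝ) : 0 ≤ Kc s := Real.sqrt_nonneg _

lemma hNorm_nonneg (s : ℝ) (a : ℤ → ℂ) : 0 ≤ hNorm s a := Real.sqrt_nonneg _

lemma hNorm_conv_le (hs : 1/2 < s) {a b : ℤ → ℂ} (ha : inHs s a) (hb : inHs s b) :
    hNorm s (fconv a b) ≤ Kc s * (hNorm s a * hNorm s b) := by
  have hs0 : (0:ℝ) ≤ s := by linarith
  rw [hNorm_eq_sqrt_phi hs0 (inHs_conv hs ha hb), hNorm_eq_sqrt_phi hs0 ha,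
    hNorm_eq_sqrt_phi hs0 hb, Kc]
  rw [← Real.sqrt_mul ENNReal.toReal_nonneg, ← Real.sqrt_mul ENNReal.toReal_nonneg,
    ← ENNReal.toReal_mul, ← ENNReal.toReal_mul]
  apply Real.sqrt_le_sqrt
  apply ENNReal.toReal_mono
  · exact ENNReal.mul_ne_top (CC_ne_top hs)
      (ENNReal.mul_ne_top ((inHs_iff hs0 a).mp ha) ((inHs_iff hs0 b).mp hb))
  · exact Phi_conv_le hs ha hb

/-- scalar pull-out for convolutions -/
lemma fconv_smul_left (z : ℂ) (a b : ℤ → ℂ) (n : ℤ) :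
    fconv (fun m => z * a m) b n = z * fconv a b n := by
  rw [fconv, fconv, ← tsum_mul_left]
  exact tsum_congr fun m => by ring

lemma fconv_diff (hs : 1/2 < s) {a b : ℤ → ℂ} (ha : inHs s a) (hb : inHs s b)
    (hab : inHs s (fun m => a m - b m)) (n : ℤ) :
    fconv a a n - fconv b b n
      = fconv a (fun m => a m - b m) n + fconv (fun m => a m - b m) b n := by
  have h1 : Summable (fun m : ℤ => a m * (a (n - m) - b (n - m))) := by
    have := conv_summable hs ha hab n
    simpa using this
  have h2 : Summable (fun m : ℤ => (a m - b m) * b (n - m)) :=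
    conv_summable hs hab hb n
  rw [fconv, fconv, fconv, fconv]
  rw [← Summable.tsum_add h1 h2, ← Summable.tsum_sub (conv_summable hs ha ha n) (conv_summable hs hb hb n)]
  exact tsum_congr fun m => by ring

end
section

abbrev E2 : Type := lp (fun _ : ℤ => ℂ) 2

variable {s : ℝ}

lemma rpow_two_toReal (x : ℝ) : x ^ ((2:ℝ≥0∞)).toReal = x ^ (2:ℕ) := by
  have h : ((2:ℝ≥0∞)).toReal = ((2:ℕ):ℝ) := by simp
  rw [h, Real.rpow_natCast]

lemma mem2_iff {f : ℤ → ℂ} : Memℓp f 2 ↔ Summable (fun n => ‖f n‖ ^ 2) := by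
  rw [memℓp_gen_iff (by simp : (0:ℝ) < ((2:ℝ≥0∞)).toReal)]
  constructor
  · intro h; convert h using 2 with n; rw [rpow_two_toReal]
  · intro h; convert h using 2 with n; rw [rpow_two_toReal]

lemma norm_sq_eq (f : E2) : ‖f‖ ^ 2 = ∑' n : ℤ, ‖f n‖ ^ 2 := by
  have h := lp.norm_rpow_eq_tsum (p := 2) (by simp : (0:ℝ) < ((2:ℝ≥0∞)).toReal) f
  simp only [rpow_two_toReal] at h
  exact h

lemma norm_eq_sqrt (f : E2) : ‖f‖ = Real.sqrt (∑' n : ℤ, ‖f n‖ ^ 2) := by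
  rw [← norm_sq_eq, Real.sqrt_sq (norm_nonneg f)]

lemma lpnorm_le_of_le {f g : E2} (h : ∀ n, ‖f n‖ ≤ ‖g n‖) : ‖f‖ ≤ ‖g‖ := by
  rw [norm_eq_sqrt, norm_eq_sqrt]
  apply Real.sqrt_le_sqrt
  exact Summable.tsum_le_tsum (fun n => pow_le_pow_left₀ (norm_nonneg _) (h n) 2)
    (mem2_iff.mp (lp.memℓp f)) (mem2_iff.mp (lp.memℓp g))

noncomputable def wtC (s : ℝ) (n : ℤ) : ℂ := ((wt s n : ℝ) : ℂ)

lemma wtC_ne (hs0 : 0 ≤ s) (n : ℤ) : wtC s n ≠ 0 :=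
  Complex.ofReal_ne_zero.mpr (wt_pos hs0 n).ne'

noncomputable def Wc (s : ℝ) (a : ℤ → ℂ) : ℤ → ℂ := fun n => wtC s n * a n

noncomputable def low (s : ℝ) (f : ℤ → ℂ) : ℤ → ℂ := fun n => f n / wtC s n

lemma Wc_low (hs0 : 0 ≤ s) (f : ℤ → ℂ) : Wc s (low s f) = f := by
  funext n
  rw [Wc, low, mul_comm, div_mul_cancel₀ _ (wtC_ne hs0 n)]

lemma low_Wc (hs0 : 0 ≤ s) (a : ℤ → ℂ) : low s (Wc s a) = a := by
  funext n
  show wtC s n * a n / wtC s n = a n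
  exact mul_div_cancel_left₀ _ (wtC_ne hs0 n)

lemma low_sub (x y : ℤ → ℂ) :
    (fun m => low s x m - low s y m) = low s (fun m => x m - y m) := by
  funext m
  rw [low, low, low, sub_div]

lemma norm_Wc (hs0 : 0 ≤ s) (a : ℤ → ℂ) (n : ℤ) : ‖Wc s a n‖ = wt s n * ‖a n‖ := by
  rw [Wc, norm_mul, wtC, Complex.norm_real, Real.norm_of_nonneg (wt_pos hs0 n).le]

lemma summable_Wc_iff (hs0 : 0 ≤ s) (a : ℤ → ℂ) :
    Summable (fun n => ‖Wc s a n‖ ^ 2) ↔ inHs s a := by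
  have e : (fun n : ℤ => ‖Wc s a n‖ ^ 2)
      = fun n : ℤ => 2 * Real.pi * ((1 + (n:ℝ)^2) ^ s * ‖a n‖ ^ 2) := by
    funext n
    rw [norm_Wc hs0, mul_pow, wt_sq hs0]
    ring
  rw [e, summable_mul_left_iff two_pi_ne]
  exact Iff.rfl

lemma inHs_iff_mem (hs0 : 0 ≤ s) (a : ℤ → ℂ) : inHs s a ↔ Memℓp (Wc s a) 2 := by
  rw [mem2_iff, summable_Wc_iff hs0]

lemma hNorm_eq_norm (hs0 : 0 ≤ s) {a : ℤ → ℂ} {f : E2} (hfa : ⇑f = Wc s a) :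
    hNorm s a = ‖f‖ := by
  rw [norm_eq_sqrt, hNorm]
  congr 1
  calc 2 * Real.pi * ∑' n : ℤ, (1 + (n:ℝ)^2) ^ s * ‖a n‖ ^ 2
      = ∑' n : ℤ, 2 * Real.pi * ((1 + (n:ℝ)^2) ^ s * ‖a n‖ ^ 2) := tsum_mul_left.symm
    _ = ∑' n : ℤ, ‖f n‖ ^ 2 := by
        refine tsum_congr fun n => ?_
        rw [hfa, norm_Wc hs0, mul_pow, wt_sq hs0]
        ring

lemma inHs_low (hs0 : 0 ≤ s) (x : E2) : inHs s (low s ⇑x) := by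
  rw [inHs_iff_mem hs0, Wc_low hs0]
  exact lp.memℓp x

lemma hNorm_low (hs0 : 0 ≤ s) (x : E2) : hNorm s (low s ⇑x) = ‖x‖ :=
  hNorm_eq_norm hs0 (Wc_low hs0 ⇑x).symm

lemma Kmul_norm_le (n : ℤ) : ‖Kmul n‖ ≤ 1 := by
  rw [Kmul, norm_div]
  have h1 : ‖-Complex.I * (n:ℂ)‖ = |(n:ℝ)| := by
    rw [norm_mul, norm_neg, Complex.norm_I, one_mul, Complex.norm_intCast]
  have h2 : ‖((1:ℂ) + ((|n| : ℤ) : ℂ))‖ = 1 + |(n:ℝ)| := by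
    have e : ((1:ℂ) + ((|n| : ℤ) : ℂ)) = (((1 + |(n:ℝ)| : ℝ)) : ℂ) := by
      rw [Complex.ofReal_add, Complex.ofReal_one]
      congr 1
      rw [← Int.cast_abs, Complex.ofReal_intCast]
    rw [e, Complex.norm_real, Real.norm_of_nonneg (by positivity)]
  rw [h1, h2]
  rw [div_le_one (by positivity)]
  linarith [abs_nonneg ((n:ℝ))]

lemma mem2_of_le {f g : ℤ → ℂ} (hg : Memℓp g 2) (h : ∀ n, ‖f n‖ ≤ ‖g n‖) : Memℓp f 2 := by
  rw [mem2_iff] at hg ⊢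
  exact Summable.of_nonneg_of_le (fun n => by positivity)
    (fun n => pow_le_pow_left₀ (norm_nonneg _) (h n) 2) hg

noncomputable def bfun (s : ℝ) (x y : E2) : ℤ → ℂ := Wc s (fconv (low s ⇑x) (low s ⇑y))

lemma bfun_mem (hs : 1/2 < s) (x y : E2) : Memℓp (bfun s x y) 2 := by
  have hs0 : (0:ℝ) ≤ s := by linarith
  exact (inHs_iff_mem hs0 _).mp (inHs_conv hs (inHs_low hs0 x) (inHs_low hs0 y))

noncomputable def Bel (hs : 1/2 < s) (x y : E2) : E2 := ⟨bfun s x y, bfun_mem hs x y⟩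

lemma Bel_coe (hs : 1/2 < s) (x y : E2) : ⇑(Bel hs x y) = bfun s x y := rfl

lemma Bel_norm (hs : 1/2 < s) (x y : E2) : ‖Bel hs x y‖ ≤ Kc s * (‖x‖ * ‖y‖) := by
  have hs0 : (0:ℝ) ≤ s := by linarith
  have h1 : hNorm s (fconv (low s ⇑x) (low s ⇑y)) = ‖Bel hs x y‖ :=
    hNorm_eq_norm hs0 (Bel_coe hs x y)
  rw [← h1, ← hNorm_low hs0 x, ← hNorm_low hs0 y]
  exact hNorm_conv_le hs (inHs_low hs0 x) (inHs_low hs0 y)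

noncomputable def cf (s : ℝ) (x : E2) : ℤ → ℂ :=
  fun n => Kmul n * (x n + (1/2 : ℂ) * bfun s x x n)

lemma cf_mem (hs : 1/2 < s) (x : E2) : Memℓp (cf s x) 2 := by
  have hmem : Memℓp (fun n => (x n : ℂ) + (1/2:ℂ) * bfun s x x n) 2 :=
    Memℓp.add (lp.memℓp x) ((bfun_mem hs x x).const_mul _)
  apply mem2_of_le hmem
  intro n
  calc ‖cf s x n‖ = ‖Kmul n‖ * ‖x n + (1/2:ℂ) * bfun s x x n‖ := norm_mul _ _
    _ ≤ 1 * ‖x n + (1/2:ℂ) * bfun s x x n‖ :=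
        mul_le_mul_of_nonneg_right (Kmul_norm_le n) (norm_nonneg _)
    _ = ‖x n + (1/2:ℂ) * bfun s x x n‖ := one_mul _

noncomputable def vf (hs : 1/2 < s) : E2 → E2 := fun x => ⟨cf s x, cf_mem hs x⟩

lemma vf_coe (hs : 1/2 < s) (x : E2) : ⇑(vf hs x) = cf s x := rfl

lemma vf_sub_coord (hs : 1/2 < s) (x y : E2) (n : ℤ) :
    (⇑(vf hs x - vf hs y)) n
      = Kmul n * ((⇑(x - y + (1/2 : ℂ) • (Bel hs x (x - y) + Bel hs (x - y) y))) n) := by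
  have hs0 : (0:ℝ) ≤ s := by linarith
  have hd : (⇑(x - y)) n = x n - y n := by rw [lp.coeFn_sub]; rfl
  have hud : (fun m => low s ⇑x m - low s ⇑y m) = low s ⇑(x - y) := by
    funext m
    show ⇑x m / wtC s m - ⇑y m / wtC s m = ⇑(x - y) m / wtC s m
    rw [lp.coeFn_sub, Pi.sub_apply, sub_div]
  have hdiff : fconv (low s ⇑x) (low s ⇑x) n - fconv (low s ⇑y) (low s ⇑y) n
      = fconv (low s ⇑x) (low s ⇑(x - y)) n + fconv (low s ⇑(x - y)) (low s ⇑y) n := by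
    have h := fconv_diff hs (inHs_low hs0 x) (inHs_low hs0 y)
      (by rw [hud]; exact inHs_low hs0 (x - y)) n
    rw [hud] at h
    exact h
  have hlhs : (⇑(vf hs x - vf hs y)) n = cf s x n - cf s y n := by
    rw [lp.coeFn_sub]; rfl
  have hrhs : (⇑(x - y + (1/2 : ℂ) • (Bel hs x (x - y) + Bel hs (x - y) y))) n
      = (x n - y n) + (1/2:ℂ) * (bfun s x (x - y) n + bfun s (x - y) y n) := by
    rw [lp.coeFn_add, Pi.add_apply, lp.coeFn_smul, Pi.smul_apply, smul_eq_mul,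
      lp.coeFn_add, Pi.add_apply, Bel_coe, Bel_coe, hd]
  rw [hlhs, hrhs, cf, cf, bfun, bfun, bfun]
  show Kmul n * (x n + (1/2:ℂ) * (wtC s n * fconv (low s ⇑x) (low s ⇑x) n))
      - Kmul n * (y n + (1/2:ℂ) * (wtC s n * fconv (low s ⇑y) (low s ⇑y) n))
    = Kmul n * ((x n - y n) + (1/2:ℂ) * (wtC s n * fconv (low s ⇑x) (low s ⇑(x - y)) n
        + wtC s n * fconv (low s ⇑(x - y)) (low s ⇑y) n))
  have expand : wtC s n * fconv (low s ⇑x) (low s ⇑x) n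
      - wtC s n * fconv (low s ⇑y) (low s ⇑y) n
      = wtC s n * fconv (low s ⇑x) (low s ⇑(x - y)) n
        + wtC s n * fconv (low s ⇑(x - y)) (low s ⇑y) n := by
    rw [← mul_add, ← mul_sub, hdiff]
  linear_combination Kmul n * (1/2:ℂ) * expand

lemma vf_sub_le (hs : 1/2 < s) (x y : E2) :
    ‖vf hs x - vf hs y‖ ≤ (1 + Kc s * (‖x‖ + ‖y‖)) * ‖x - y‖ := by
  set z : E2 := x - y + (1/2 : ℂ) • (Bel hs x (x - y) + Bel hs (x - y) y) with hz
  have h1 : ‖vf hs x - vf hs y‖ ≤ ‖z‖ := by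
    apply lpnorm_le_of_le
    intro n
    rw [vf_sub_coord hs x y n]
    calc ‖Kmul n * (⇑z) n‖ = ‖Kmul n‖ * ‖(⇑z) n‖ := norm_mul _ _
      _ ≤ 1 * ‖(⇑z) n‖ := mul_le_mul_of_nonneg_right (Kmul_norm_le n) (norm_nonneg _)
      _ = ‖(⇑z) n‖ := one_mul _
  have h2 : ‖z‖ ≤ ‖x - y‖ + (1/2) * (Kc s * (‖x‖ * ‖x - y‖) + Kc s * (‖x - y‖ * ‖y‖)) := by
    rw [hz]
    calc ‖x - y + (1/2 : ℂ) • (Bel hs x (x - y) + Bel hs (x - y) y)‖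
        ≤ ‖x - y‖ + ‖(1/2 : ℂ) • (Bel hs x (x - y) + Bel hs (x - y) y)‖ := norm_add_le _ _
      _ = ‖x - y‖ + (1/2) * ‖Bel hs x (x - y) + Bel hs (x - y) y‖ := by
          rw [norm_smul]
          have h12 : ‖(1/2:ℂ)‖ = 1/2 := by
            rw [show (1/2:ℂ) = ((1/2:ℝ):ℂ) from by norm_num, Complex.norm_real,
              Real.norm_of_nonneg (by norm_num)]
          rw [h12]
      _ ≤ ‖x - y‖ + (1/2) * (‖Bel hs x (x - y)‖ + ‖Bel hs (x - y) y‖) := by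
          have := norm_add_le (Bel hs x (x - y)) (Bel hs (x - y) y)
          nlinarith [this]
      _ ≤ ‖x - y‖ + (1/2) * (Kc s * (‖x‖ * ‖x - y‖) + Kc s * (‖x - y‖ * ‖y‖)) := by
          have hb1 := Bel_norm hs x (x - y)
          have hb2 := Bel_norm hs (x - y) y
          nlinarith
  have h3 : ‖x - y‖ + (1/2) * (Kc s * (‖x‖ * ‖x - y‖) + Kc s * (‖x - y‖ * ‖y‖))
      ≤ (1 + Kc s * (‖x‖ + ‖y‖)) * ‖x - y‖ := by
    have hk := Kc_nonneg s
    have hd := norm_nonneg (x - y)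
    have hx := norm_nonneg x
    have hy := norm_nonneg y
    nlinarith [mul_nonneg (mul_nonneg hk hx) hd, mul_nonneg (mul_nonneg hk hy) hd,
      mul_nonneg (mul_nonneg hk hd) hy, mul_nonneg (mul_nonneg hk hd) hx]
  linarith

lemma vf_zero (hs : 1/2 < s) : vf hs 0 = 0 := by
  apply lp.ext
  funext n
  have h0 : (⇑(0:E2)) = 0 := lp.coeFn_zero _ _
  have hlow : low s ⇑(0:E2) = fun _ => (0:ℂ) := by
    funext m
    rw [low, h0]
    simp
  show cf s 0 n = (0 : ℤ → ℂ) n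
  rw [cf, bfun, hlow]
  have hconv : fconv (fun _ => (0:ℂ)) (fun _ => (0:ℂ)) n = 0 := by
    rw [fconv]
    simp
  rw [Wc, hconv, h0]
  simp

lemma vf_norm_le (hs : 1/2 < s) (x : E2) : ‖vf hs x‖ ≤ (1 + Kc s * ‖x‖) * ‖x‖ := by
  have h := vf_sub_le hs x 0
  rw [vf_zero hs, sub_zero, sub_zero, norm_zero, add_zero] at h
  exact h

lemma vf_lipOnBall (hs : 1/2 < s) (c : E2) (R : ℝ) (hR : 0 ≤ R) :
    LipschitzOnWith (Real.toNNReal (1 + Kc s * (2*(‖c‖+R)))) (vf hs) (closedBall c R) := by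
  apply LipschitzOnWith.of_dist_le_mul
  intro x hx y hy
  rw [dist_eq_norm, dist_eq_norm]
  have hxn : ‖x‖ ≤ ‖c‖ + R := norm_le_norm_add_const_of_dist_le (mem_closedBall.mp hx)
  have hyn : ‖y‖ ≤ ‖c‖ + R := norm_le_norm_add_const_of_dist_le (mem_closedBall.mp hy)
  have hnn : (0:ℝ) ≤ 1 + Kc s * (2*(‖c‖+R)) := by
    have := Kc_nonneg s
    have h0 : (0:ℝ) ≤ ‖c‖ + R := by positivity
    nlinarith
  rw [Real.coe_toNNReal _ hnn]
  calc ‖vf hs x - vf hs y‖ ≤ (1 + Kc s * (‖x‖ + ‖y‖)) * ‖x - y‖ := vf_sub_le hs x y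
    _ ≤ (1 + Kc s * (2*(‖c‖+R))) * ‖x - y‖ := by
        apply mul_le_mul_of_nonneg_right _ (norm_nonneg _)
        have := Kc_nonneg s
        nlinarith

lemma vf_cont (hs : 1/2 < s) : Continuous (vf hs) := by
  rw [continuous_iff_continuousAt]
  intro x
  exact ((vf_lipOnBall hs x 1 zero_le_one).continuousOn).continuousAt
    (Metric.closedBall_mem_nhds x one_pos)

noncomputable def evCLM (n : ℤ) : E2 →L[ℂ] ℂ :=
  LinearMap.mkContinuous
    { toFun := fun f => f n
      map_add' := fun f g => by
        show (⇑(f + g)) n = (⇑f) n + (⇑g) n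
        rw [lp.coeFn_add]; rfl
      map_smul' := fun c f => by
        simp only [RingHom.id_apply, smul_eq_mul]
        show (⇑(c • f)) n = c * (⇑f) n
        rw [lp.coeFn_smul]; rfl }
    1 (fun f => by
        rw [one_mul]
        exact lp.norm_apply_le_norm (by norm_num) f n)

lemma evCLM_apply (n : ℤ) (f : E2) : evCLM n f = f n := rfl

lemma evCLM_vf (hs : 1/2 < s) (x : E2) (n : ℤ) :
    evCLM n (vf hs x) = Kmul n * (x n + (1/2:ℂ) * (wtC s n * fconv (low s ⇑x) (low s ⇑x) n)) :=
  rfl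

end
section
open scoped ENNReal NNReal Topology
open Metric Set MeasureTheory Filter

variable {s : ℝ}

lemma hNorm_sub_eq (hs0 : 0 ≤ s) {a b : ℤ → ℂ} {f g : E2}
    (hfa : ⇑f = Wc s a) (hgb : ⇑g = Wc s b) :
    hNorm s (fun k => a k - b k) = ‖f - g‖ := by
  apply hNorm_eq_norm hs0
  funext n
  rw [lp.coeFn_sub, Pi.sub_apply, hfa, hgb]
  show Wc s a n - Wc s b n = wtC s n * (a n - b n)
  show wtC s n * a n - wtC s n * b n = wtC s n * (a n - b n)
  ring

lemma evCLM_vf_eq_raw (hs : 1/2 < s) (x : E2) (n : ℤ) (u' : ℤ → ℂ) (hu : u' = low s ⇑x) :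
    evCLM n (vf hs x) = wtC s n * (Kmul n * (u' n + (1/2) * fconv u' u' n)) := by
  have hs0 : (0:ℝ) ≤ s := by linarith
  rw [evCLM_vf hs, hu]
  have hx : (x n : ℂ) = wtC s n * low s ⇑x n := by
    show (x n : ℂ) = wtC s n * (x n / wtC s n)
    rw [mul_comm, div_mul_cancel₀ _ (wtC_ne hs0 n)]
  rw [hx]
  ring

lemma sol_rep (hs : 1/2 < s) {T : ℝ} (hT : 0 < T) {u₀ : ℤ → ℂ}
    {w : ℝ → ℤ → ℂ} (hw : IsSol s T u₀ w) :
    ∃ β : ℝ → E2,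
      (∀ t ∈ Icc (-T) T, ⇑(β t) = Wc s (w t)) ∧
      ContinuousOn β (Icc (-T) T) ∧
      (⇑(β 0) = Wc s u₀) ∧
      ∀ t ∈ Ioo (-T) T, HasDerivAt β (vf hs (β t)) t := by
  have hs0 : (0:ℝ) ≤ s := by linarith
  obtain ⟨hmem, hcont, heq⟩ := hw
  set cl : ℝ → ℝ := fun t => max (-T) (min T t) with hcl
  have hclmem : ∀ t, cl t ∈ Icc (-T) T := by
    intro t
    constructor
    · exact le_max_left _ _
    · exact max_le (by linarith) (min_le_left _ _)
  have hclid : ∀ t ∈ Icc (-T) T, cl t = t := by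
    intro t ht
    show max (-T) (min T t) = t
    rw [min_eq_right ht.2, max_eq_right ht.1]
  set β : ℝ → E2 :=
    fun t => ⟨Wc s (w (cl t)), (inHs_iff_mem hs0 _).mp (hmem _ (hclmem t))⟩ with hβ
  have hβcoe : ∀ t, ⇑(β t) = Wc s (w (cl t)) := fun t => rfl
  have hβIcc : ∀ t ∈ Icc (-T) T, ⇑(β t) = Wc s (w t) := by
    intro t ht; rw [hβcoe, hclid t ht]
  have hβcont : ContinuousOn β (Icc (-T) T) := by
    intro t₀ ht₀
    rw [ContinuousWithinAt, tendsto_iff_norm_sub_tendsto_zero]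
    have h0 := hcont t₀ ht₀
    refine Filter.Tendsto.congr' ?_ h0
    refine Filter.eventuallyEq_of_mem self_mem_nhdsWithin (fun t ht => ?_)
    exact hNorm_sub_eq hs0 (hβIcc t ht) (hβIcc t₀ ht₀)
  have h0mem : (0:ℝ) ∈ Icc (-T) T := by constructor <;> linarith
  have hw0 : w 0 = u₀ := by
    funext n
    have h := heq 0 h0mem n
    rw [intervalIntegral.integral_same, add_zero] at h
    exact h
  have hβ0 : ⇑(β 0) = Wc s u₀ := by rw [hβIcc 0 h0mem, hw0]
  -- global continuity of β
  have hβcl : (fun t => β (cl t)) = β := by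
    funext t
    apply lp.ext
    rw [hβcoe, hβcoe, hclid (cl t) (hclmem t)]
  have hclcont : Continuous cl := continuous_const.max (continuous_const.min continuous_id)
  have hβglob : Continuous β := by
    have h := hβcont.comp_continuous hclcont hclmem
    rw [← hβcl]
    exact h
  have hg : Continuous (fun τ => vf hs (β τ)) := (vf_cont hs).comp hβglob
  set γ : ℝ → E2 := fun t => β 0 + ∫ τ in (0:ℝ)..t, vf hs (β τ) with hγ
  have hγderiv : ∀ t : ℝ, HasDerivAt γ (vf hs (β t)) t := by
    intro t
    apply HasDerivAt.const_add
    exact intervalIntegral.integral_hasDerivAt_right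
      (hg.intervalIntegrable (μ := MeasureTheory.volume) 0 t)
      (hg.stronglyMeasurableAtFilter MeasureTheory.volume (nhds t)) hg.continuousAt
  have hβγ : ∀ t ∈ Icc (-T) T, β t = γ t := by
    intro t ht
    apply lp.ext
    funext n
    have hint : ∫ τ in (0:ℝ)..t, evCLM n (vf hs (β τ))
        = wtC s n * ∫ τ in (0:ℝ)..t,
            (Kmul n * (w τ n + (1/2) * fconv (w τ) (w τ) n)) := by
      rw [← intervalIntegral.integral_const_mul]
      apply intervalIntegral.integral_congr
      intro τ hτ
      have hτ' : τ ∈ Icc (-T) T := uIcc_subset_Icc h0mem ht hτ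
      exact evCLM_vf_eq_raw hs (β τ) n (w τ)
        (by rw [hβIcc τ hτ', low_Wc hs0])
    have hγn : (⇑(γ t)) n = (⇑(β 0)) n + wtC s n * ∫ τ in (0:ℝ)..t,
        (Kmul n * (w τ n + (1/2) * fconv (w τ) (w τ) n)) := by
      rw [hγ]
      rw [lp.coeFn_add, Pi.add_apply]
      congr 1
      rw [← hint]
      have hii : IntervalIntegrable (fun τ => vf hs (β τ)) MeasureTheory.volume 0 t :=
        hg.intervalIntegrable 0 t
      have hcomm := ContinuousLinearMap.intervalIntegral_comp_comm (evCLM n) hii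
      exact hcomm.symm
    have hsol := heq t ht n
    rw [hβIcc t ht]
    show wtC s n * w t n = (⇑(γ t)) n
    rw [hγn, hβ0]
    show wtC s n * w t n
        = wtC s n * u₀ n + wtC s n * ∫ τ in (0:ℝ)..t,
            (Kmul n * (w τ n + (1/2) * fconv (w τ) (w τ) n))
    rw [hsol]
    ring
  refine ⟨β, hβIcc, hβcont, hβ0, ?_⟩
  intro t ht
  have hne : Icc (-T) T ∈ 𝓝 t := Icc_mem_nhds ht.1 ht.2
  exact (hγderiv t).congr_of_eventuallyEq
    (Filter.eventuallyEq_of_mem hne (fun τ hτ => hβγ τ hτ))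

end

end RBO


/-- **Local well-posedness of the periodic rBO equation for s > 1/2**:
for every `u₀ ∈ H^s_per` there exist `T > 0` and a unique solution
`u ∈ C([-T,T]; H^s_per)` of the initial value problem. -/
theorem rBO_local_wellposedness (s : ℝ) (hs : 1 / 2 < s)
    (u₀ : ℤ → ℂ) (h₀ : inHs s u₀) :
    ∃ T > (0:ℝ), (∃ u : ℝ → ℤ → ℂ, IsSol s T u₀ u) ∧
      ∀ u v : ℝ → ℤ → ℂ, IsSol s T u₀ u → IsSol s T u₀ v →
        ∀ t ∈ Set.Icc (-T) T, u t = v t := by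
  classical
  have hs0 : (0:ℝ) ≤ s := by linarith
  set x₀ : RBO.E2 := ⟨RBO.Wc s u₀, (RBO.inHs_iff_mem hs0 u₀).mp h₀⟩ with hx₀
  have hx₀coe : ⇑x₀ = RBO.Wc s u₀ := rfl
  set M : ℝ := ‖x₀‖ + 1 with hM
  have hM0 : 0 < M := by positivity
  set C : ℝ := (1 + RBO.Kc s * M) * M + 1 with hC
  have hC0 : 0 < C := by
    have h1 : 0 ≤ RBO.Kc s * M := mul_nonneg (RBO.Kc_nonneg s) hM0.le
    have h2 : 0 ≤ (1 + RBO.Kc s * M) * M := mul_nonneg (by linarith) hM0.le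
    rw [hC]
    linarith
  set L : ℝ≥0 := Real.toNNReal (1 + RBO.Kc s * (2*(‖x₀‖+1))) with hL
  set T0 : ℝ := 1/(2*C) with hT0def
  have hT0 : 0 < T0 := by positivity
  have hpl : IsPicardLindelof (fun _ x => RBO.vf hs x)
      (⟨0, by constructor <;> linarith⟩ : Set.Icc (-T0) T0) x₀ 1 0 (Real.toNNReal C) L := by
    constructor
    · intro t _
      exact RBO.vf_lipOnBall hs x₀ 1 zero_le_one
    · intro x _
      exact continuousOn_const
    · intro t _ x hx
      rw [NNReal.coe_one] at hx
      rw [Real.coe_toNNReal _ hC0.le]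
      have hxn : ‖x‖ ≤ M := by
        rw [hM]
        exact norm_le_norm_add_const_of_dist_le (Metric.mem_closedBall.mp hx)
      calc ‖RBO.vf hs x‖ ≤ (1 + RBO.Kc s * ‖x‖) * ‖x‖ := RBO.vf_norm_le hs x
        _ ≤ (1 + RBO.Kc s * M) * M := by
            have hKc := RBO.Kc_nonneg s
            have hx0 := norm_nonneg x
            have hstep : RBO.Kc s * ‖x‖ * ‖x‖ ≤ RBO.Kc s * M * M :=
              mul_le_mul (mul_le_mul_of_nonneg_left hxn hKc) hxn hx0
                (mul_nonneg hKc hM0.le)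
            nlinarith [hstep]
        _ ≤ C := by rw [hC]; linarith
    · have hmax : max (T0 - 0) (0 - -T0) = T0 := by
        rw [sub_zero, zero_sub, neg_neg, max_self]
      show (Real.toNNReal C : ℝ) * max (T0 - 0) (0 - -T0) ≤ ((1:ℝ≥0):ℝ) - ((0:ℝ≥0):ℝ)
      rw [Real.coe_toNNReal _ hC0.le]
      rw [hmax, hT0def]
      rw [show C * (1/(2*C)) = 1/2 from by field_simp]
      norm_num
  obtain ⟨α, hα0, hαd⟩ := hpl.exists_eq_forall_mem_Icc_hasDerivWithinAt₀
  replace hα0 : α 0 = x₀ := hα0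
  set T : ℝ := T0/2 with hTdef
  have hT : 0 < T := by positivity
  have hsub : Set.Icc (-T) T ⊆ Set.Icc (-T0) T0 :=
    Set.Icc_subset_Icc (by linarith) (by linarith)
  have hαat : ∀ t ∈ Set.Icc (-T) T, HasDerivAt α (RBO.vf hs (α t)) t := by
    intro t ht
    exact (hαd t (hsub ht)).hasDerivAt
      (Icc_mem_nhds (by linarith [ht.1]) (by linarith [ht.2]))
  have hαcont : ContinuousOn α (Set.Icc (-T0) T0) :=
    fun t ht => (hαd t ht).continuousWithinAt
  have h0T : (0:ℝ) ∈ Set.Icc (-T) T := by constructor <;> linarith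
  refine ⟨T, hT, ⟨?_, ?_⟩⟩
  · -- existence
    refine ⟨fun t => RBO.low s ⇑(α t), ?_, ?_, ?_⟩
    · intro t _
      exact RBO.inHs_low hs0 (α t)
    · intro t₀ ht₀
      have hc : ContinuousWithinAt α (Set.Icc (-T) T) t₀ :=
        ((hαd t₀ (hsub ht₀)).continuousWithinAt).mono hsub
      have h1 : Filter.Tendsto (fun t => α t - α t₀) (nhdsWithin t₀ (Set.Icc (-T) T))
          (nhds 0) := by
        have h1' : Filter.Tendsto (fun t => α t - α t₀) (nhdsWithin t₀ (Set.Icc (-T) T))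
            (nhds (α t₀ - α t₀)) := hc.sub tendsto_const_nhds
        rw [sub_self] at h1'
        exact h1'
      have h2 : Filter.Tendsto (fun t => ‖α t - α t₀‖) (nhdsWithin t₀ (Set.Icc (-T) T))
          (nhds 0) := by
        simpa using h1.norm
      apply h2.congr
      intro t
      exact (RBO.hNorm_sub_eq hs0 (RBO.Wc_low hs0 ⇑(α t)).symm
        (RBO.Wc_low hs0 ⇑(α t₀)).symm).symm
    · intro t ht n
      have huIcc : Set.uIcc (0:ℝ) t ⊆ Set.Icc (-T) T := Set.uIcc_subset_Icc h0T ht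
      have hderivAll : ∀ τ ∈ Set.uIcc (0:ℝ) t,
          HasDerivAt (fun σ => RBO.evCLM n (α σ))
            (RBO.evCLM n (RBO.vf hs (α τ))) τ := by
        intro τ hτ
        exact (((RBO.evCLM n).restrictScalars ℝ).hasFDerivAt (x := α τ)).comp_hasDerivAt τ
          (hαat τ (huIcc hτ))
      have hψcont : ContinuousOn (fun τ => RBO.evCLM n (RBO.vf hs (α τ)))
          (Set.uIcc (0:ℝ) t) := by
        exact ((RBO.evCLM n).continuous.comp (RBO.vf_cont hs)).comp_continuousOn
          (hαcont.mono (fun τ hτ => hsub (huIcc hτ)))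
      have hFTC := intervalIntegral.integral_eq_sub_of_hasDerivAt hderivAll
        (hψcont.intervalIntegrable)
      have hid : (fun τ => RBO.evCLM n (RBO.vf hs (α τ)))
          = fun τ => RBO.wtC s n * (Kmul n * (RBO.low s ⇑(α τ) n
              + (1/2) * fconv (RBO.low s ⇑(α τ)) (RBO.low s ⇑(α τ)) n)) := by
        funext τ
        exact RBO.evCLM_vf_eq_raw hs (α τ) n (RBO.low s ⇑(α τ)) rfl
      rw [hid, intervalIntegral.integral_const_mul] at hFTC
      have hev : ∀ σ : ℝ, RBO.evCLM n (α σ) = RBO.wtC s n * RBO.low s ⇑(α σ) n := by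
        intro σ
        show (⇑(α σ)) n = RBO.wtC s n * RBO.low s ⇑(α σ) n
        conv_lhs => rw [← RBO.Wc_low hs0 ⇑(α σ)]
        rfl
      have h0 : RBO.evCLM n (α 0) = RBO.wtC s n * u₀ n := by
        rw [RBO.evCLM_apply, hα0, hx₀coe]
        rfl
      rw [hev t, h0] at hFTC
      have hwne := RBO.wtC_ne hs0 n
      show RBO.low s ⇑(α t) n = u₀ n + ∫ τ in (0:ℝ)..t,
        Kmul n * (RBO.low s ⇑(α τ) n
          + (1/2) * fconv (RBO.low s ⇑(α τ)) (RBO.low s ⇑(α τ)) n)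
      apply mul_left_cancel₀ hwne
      rw [mul_add]
      linear_combination -hFTC
  · -- uniqueness
    intro u v hu hv t ht
    obtain ⟨βu, hβuIcc, hβucont, hβu0, hβud⟩ := RBO.sol_rep hs hT hu
    obtain ⟨βv, hβvIcc, hβvcont, hβv0, hβvd⟩ := RBO.sol_rep hs hT hv
    obtain ⟨Mu, hMu⟩ := (isCompact_Icc).exists_bound_of_continuousOn hβucont
    obtain ⟨Mv, hMv⟩ := (isCompact_Icc).exists_bound_of_continuousOn hβvcont
    set MM : ℝ := max 0 (max Mu Mv) with hMM
    have hMM0 : 0 ≤ MM := le_max_left _ _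
    set LL : ℝ≥0 := Real.toNNReal (1 + RBO.Kc s * (2*(‖(0:RBO.E2)‖+MM))) with hLL
    have hlip : ∀ τ : ℝ, LipschitzOnWith LL (RBO.vf hs) (Metric.closedBall (0:RBO.E2) MM) :=
      fun _ => RBO.vf_lipOnBall hs 0 MM hMM0
    have hmemu : ∀ τ ∈ Set.Ioo (-T) T, βu τ ∈ Metric.closedBall (0:RBO.E2) MM := by
      intro τ hτ
      rw [mem_closedBall_zero_iff]
      exact le_trans (hMu τ (Set.Ioo_subset_Icc_self hτ))
        (le_trans (le_max_left _ _) (le_max_right 0 _))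
    have hmemv : ∀ τ ∈ Set.Ioo (-T) T, βv τ ∈ Metric.closedBall (0:RBO.E2) MM := by
      intro τ hτ
      rw [mem_closedBall_zero_iff]
      exact le_trans (hMv τ (Set.Ioo_subset_Icc_self hτ))
        (le_trans (le_max_right _ _) (le_max_right 0 _))
    have hstart : βu 0 = βv 0 := by
      apply lp.ext
      rw [hβu0, hβv0]
    have hEq := ODE_solution_unique_of_mem_Icc
      (v := fun _ x => RBO.vf hs x) (s := fun _ => Metric.closedBall (0:RBO.E2) MM)
      (fun τ _ => hlip τ) ⟨neg_lt_zero.mpr hT, hT⟩ hβucont hβud hmemu hβvcont hβvd hmemv hstart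
    have h := hEq ht
    funext n
    have hcu := congrFun (hβuIcc t ht) n
    have hcv := congrFun (hβvIcc t ht) n
    rw [h] at hcu
    have heqn : RBO.Wc s (u t) n = RBO.Wc s (v t) n := by rw [← hcu, hcv]
    exact mul_left_cancel₀ (RBO.wtC_ne hs0 n) heqn
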